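/- Let d = 2, let J = [[0,−1],[1,0]] (rotation by π/2), and let X ∈ ℝ^{2×n} have unit-norm columns. Every Ẋ ∈ ℝ^{2×n} with diag(XᵀẊ) = 0 has the form Ẋ = J X diag(α) for some α ∈ ℝⁿ, and for all α ∈ ℝⁿ the Hessian quadratic form satisfies −⟨ẊᵀẊ, S⟩ + (1/2)⟨(XᵀẊ + ẊᵀX)^{⊙2}, W ⊙ φ''(XᵀX)⟩ = −αᵀL(M)α, where m_ij = w_ij·(x_iᵀx_j·φ'(x_iᵀx_j) − (1−(x_iᵀx_j)²)·φ''(x_iᵀx_j)) and L(M) = diag(M1) − M. Consequently, the eigenvalues of the Riemannian Hessian of f at X equal those of −L(M). -/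
import Mathlib


open Matrix

noncomputable section

/-- Frobenius inner product `⟨A,B⟩ = ∑ᵢⱼ Aᵢⱼ Bᵢⱼ`. -/
def frob {ι κ : Type*} [Fintype ι] [Fintype κ] (A B : Matrix ι κ ℝ) : ℝ :=
  ∑ i, ∑ j, A i j * B i j

/-- `ddiag` zeroes out all off-diagonal entries of a square matrix. -/
def ddiag {ι : Type*} [Fintype ι] [DecidableEq ι] (M : Matrix ι ι ℝ) : Matrix ι ι ℝ :=
  Matrix.diagonal fun i => M i i

/-- Graph Laplacian `L(M) = diag(M 1) − M`. -/
def lap {ι : Type*} [Fintype ι] [DecidableEq ι] (M : Matrix ι ι ℝ) : Matrix ι ι ℝ :=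
  Matrix.diagonal (fun i => ∑ j, M i j) - M

/-- `X` has unit-norm columns. -/
def unitCols {d : ℕ} {ι : Type*} [Fintype ι] (X : Matrix (Fin d) ι ℝ) : Prop :=
  ∀ j, ∑ i, X i j ^ 2 = 1

/-- `A = W ⊙ φ'(XᵀX)` (`d1` playing the role of `φ'`). -/
def Amat {d : ℕ} {ι : Type*} [Fintype ι] (W : Matrix ι ι ℝ) (X : Matrix (Fin d) ι ℝ)
    (d1 : ℝ → ℝ) : Matrix ι ι ℝ :=
  Matrix.hadamard W ((Xᵀ * X).map d1)

/-- `S = ddiag(XᵀXA) − A`. -/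
def Smat {d : ℕ} {ι : Type*} [Fintype ι] [DecidableEq ι] (W : Matrix ι ι ℝ)
    (X : Matrix (Fin d) ι ℝ) (d1 : ℝ → ℝ) : Matrix ι ι ℝ :=
  ddiag ((Xᵀ * X) * Amat W X d1) - Amat W X d1

/-- First-order criticality: `X S = 0`, i.e. `X·ddiag(XᵀXA) = XA`
(vanishing Riemannian gradient on the product of spheres). -/
def IsCritical {d : ℕ} {ι : Type*} [Fintype ι] [DecidableEq ι] (W : Matrix ι ι ℝ)
    (X : Matrix (Fin d) ι ℝ) (d1 : ℝ → ℝ) : Prop :=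
  X * Smat W X d1 = 0

/-- The Riemannian Hessian quadratic form of `f` at `X` is negative semidefinite:
`−⟨ẊᵀẊ, S⟩ + (1/2)⟨(XᵀẊ + ẊᵀX)^{⊙2}, W ⊙ φ''(XᵀX)⟩ ≤ 0` for all tangent `Ẋ`. -/
def HessNegSemidef {d : ℕ} {ι : Type*} [Fintype ι] [DecidableEq ι] (W : Matrix ι ι ℝ)
    (X : Matrix (Fin d) ι ℝ) (d1 d2 : ℝ → ℝ) : Prop :=
  ∀ V : Matrix (Fin d) ι ℝ, (∀ j, (Xᵀ * V) j j = 0) →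
    -(frob (Vᵀ * V) (Smat W X d1))
      + (1 / 2) * frob ((Xᵀ * V + Vᵀ * X).map fun t => t ^ 2)
          (Matrix.hadamard W ((Xᵀ * X).map d2)) ≤ 0

/-- The graph with an edge `{i,j}` whenever `w_ij > 0` is connected. -/
def ConnectedW {ι : Type*} (W : Matrix ι ι ℝ) : Prop :=
  (SimpleGraph.fromRel fun i j => 0 < W i j).Connected

/-- `f(Y) = (1/2)⟨W, φ(YᵀY)⟩`. -/
def fval {d : ℕ} {ι : Type*} [Fintype ι] (W : Matrix ι ι ℝ) (φ : ℝ → ℝ)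
    (Y : Matrix (Fin d) ι ℝ) : ℝ :=
  (1 / 2) * frob W ((Yᵀ * Y).map φ)

/-- `h(t) = tφ'(t) − (1−t²)φ''(t)`. -/
def hfun (d1 d2 : ℝ → ℝ) (t : ℝ) : ℝ := t * d1 t - (1 - t ^ 2) * d2 t

/-- The matrix `M` with `m_ij = w_ij · h(x_iᵀx_j)`. -/
def Mmat {d : ℕ} {ι : Type*} [Fintype ι] (W : Matrix ι ι ℝ) (X : Matrix (Fin d) ι ℝ)
    (d1 d2 : ℝ → ℝ) : Matrix ι ι ℝ :=
  Matrix.of fun i j => W i j * hfun d1 d2 ((Xᵀ * X) i j)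

/-- The kernel of `L` is exactly `span(1)`. -/
def KernelIsConst {ι : Type*} [Fintype ι] [DecidableEq ι] (L : Matrix ι ι ℝ) : Prop :=
  ∀ α : ι → ℝ, L.mulVec α = 0 ↔ ∃ c : ℝ, ∀ k, α k = c

/-- The regular `n`-gon configuration on the unit circle. -/
def ngon (n : ℕ) : Matrix (Fin 2) (Fin n) ℝ :=
  Matrix.of fun a j =>
    if a = 0 then Real.cos (2 * Real.pi * (j : ℝ) / (n : ℝ))
    else Real.sin (2 * Real.pi * (j : ℝ) / (n : ℝ))

/-- The log-sum-exp smoothing `φ_{ε,τ}(t) = ε·log(1 + e^{(t−τ)/ε})` of the ReLU. -/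
def philse (ε τ : ℝ) : ℝ → ℝ := fun t => ε * Real.log (1 + Real.exp ((t - τ) / ε))

lemma Japp {n : ℕ} (X : Matrix (Fin 2) (Fin n) ℝ) (α : Fin n → ℝ) (i : Fin 2) (j : Fin n) :
    (!![(0:ℝ),-1;1,0] * X * Matrix.diagonal α) i j =
      (if i = 0 then -(X 1 j) else X 0 j) * α j := by
  rw [Matrix.mul_diagonal, Matrix.mul_apply, Fin.sum_univ_two]
  fin_cases i <;> simp

/-- Lemma 1, `d = 2` Hessian structure: every tangent vector at `X` has the
form `Ẋ = J X diag(α)`, and on these the Hessian quadratic form equals `−αᵀ L(M) α` with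
`m_ij = w_ij·h(x_iᵀx_j)`, `h(t) = tφ'(t) − (1−t²)φ''(t)`. -/
theorem hessian_structure_circle
    {n : ℕ} (hn : 1 ≤ n)
    (W : Matrix (Fin n) (Fin n) ℝ) (hWsymm : W.IsSymm) (hWnonneg : ∀ i j, 0 ≤ W i j)
    (φ d1 d2 : ℝ → ℝ)
    (hder1 : ∀ t ∈ Set.Icc (-1 : ℝ) 1, HasDerivAt φ (d1 t) t)
    (hder2 : ∀ t ∈ Set.Icc (-1 : ℝ) 1, HasDerivAt d1 (d2 t) t)
    (hd2cont : ContinuousOn d2 (Set.Icc (-1 : ℝ) 1))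
    (X : Matrix (Fin 2) (Fin n) ℝ) (hX : unitCols X) :
    (∀ V : Matrix (Fin 2) (Fin n) ℝ, (∀ j, (Xᵀ * V) j j = 0) →
      ∃ α : Fin n → ℝ, V = !![(0 : ℝ), -1; 1, 0] * X * Matrix.diagonal α) ∧
    (∀ α : Fin n → ℝ,
      -(frob ((!![(0 : ℝ), -1; 1, 0] * X * Matrix.diagonal α)ᵀ *
            (!![(0 : ℝ), -1; 1, 0] * X * Matrix.diagonal α)) (Smat W X d1))
        + (1 / 2) * frob
            ((Xᵀ * (!![(0 : ℝ), -1; 1, 0] * X * Matrix.diagonal α)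
              + (!![(0 : ℝ), -1; 1, 0] * X * Matrix.diagonal α)ᵀ * X).map fun t => t ^ 2)
            (Matrix.hadamard W ((Xᵀ * X).map d2))
      = -(α ⬝ᵥ (lap (Mmat W X d1 d2)).mulVec α)) := by
  constructor
  · intro V hV
    refine ⟨fun j => X 0 j * V 1 j - X 1 j * V 0 j, ?_⟩
    ext i j
    have h1 : X 0 j ^ 2 + X 1 j ^ 2 = 1 := by
      have := hX j; rwa [Fin.sum_univ_two] at this
    have h2 : X 0 j * V 0 j + X 1 j * V 1 j = 0 := by
      have := hV j; rwa [Matrix.mul_apply, Fin.sum_univ_two, Matrix.transpose_apply,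
        Matrix.transpose_apply] at this
    rw [Japp]
    fin_cases i <;> simp
    · linear_combination (-(V 0 j)) * h1 + X 0 j * h2
    · linear_combination (-(V 1 j)) * h1 + X 1 j * h2
  · intro α
    set V := !![(0 : ℝ), -1; 1, 0] * X * Matrix.diagonal α with hVdef
    set c : Fin n → Fin n → ℝ := fun i j => X 0 i * X 0 j + X 1 i * X 1 j with hcdef
    set s : Fin n → Fin n → ℝ := fun i j => X 1 i * X 0 j - X 0 i * X 1 j with hsdef
    have hXX : ∀ i j, (Xᵀ * X) i j = c i j := by
      intro i j
      rw [Matrix.mul_apply, Fin.sum_univ_two]; rfl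
    have hcol : ∀ j, X 0 j ^ 2 + X 1 j ^ 2 = 1 := by
      intro j; have := hX j; rwa [Fin.sum_univ_two] at this
    have hcd : ∀ i, c i i = 1 := by
      intro i; show X 0 i * X 0 i + X 1 i * X 1 i = 1
      have := hcol i; nlinarith [this]
    have hcsymm : ∀ i j, c i j = c j i := by
      intro i j; show X 0 i * X 0 j + X 1 i * X 1 j = X 0 j * X 0 i + X 1 j * X 1 i; ring
    have hpyth : ∀ i j, s i j ^ 2 = 1 - c i j ^ 2 := by
      intro i j
      show (X 1 i * X 0 j - X 0 i * X 1 j) ^ 2 = 1 - (X 0 i * X 0 j + X 1 i * X 1 j) ^ 2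
      linear_combination (X 0 j ^ 2 + X 1 j ^ 2) * hcol i + hcol j
    have hV0 : ∀ j, V 0 j = -(X 1 j) * α j := by
      intro j; rw [hVdef, Japp]; simp
    have hV1 : ∀ j, V 1 j = X 0 j * α j := by
      intro j; rw [hVdef, Japp]; simp
    have hVtV : ∀ i j, (Vᵀ * V) i j = α i * α j * c i j := by
      intro i j
      rw [Matrix.mul_apply, Fin.sum_univ_two, Matrix.transpose_apply, Matrix.transpose_apply,
        hV0, hV1, hV0, hV1]
      show _ = α i * α j * (X 0 i * X 0 j + X 1 i * X 1 j); ring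
    have hXtV : ∀ i j, (Xᵀ * V + Vᵀ * X) i j = (α j - α i) * s i j := by
      intro i j
      rw [Matrix.add_apply, Matrix.mul_apply, Matrix.mul_apply, Fin.sum_univ_two,
        Fin.sum_univ_two]
      simp only [Matrix.transpose_apply]
      rw [hV0, hV1, hV0, hV1]
      show _ = (α j - α i) * (X 1 i * X 0 j - X 0 i * X 1 j); ring
    -- closed forms
    have hA1 : frob (Vᵀ * V) (Smat W X d1)
        = (∑ i, ∑ j, α i ^ 2 * (c i j * (W i j * d1 (c i j))))
          - (∑ i, ∑ j, α i * α j * (c i j * (W i j * d1 (c i j)))) := by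
      unfold frob Smat ddiag Amat
      rw [← Finset.sum_sub_distrib]
      refine Finset.sum_congr rfl fun i _ => ?_
      have hD : ((Xᵀ * X) * Matrix.hadamard W ((Xᵀ * X).map d1)) i i
          = ∑ k, c i k * (W i k * d1 (c i k)) := by
        rw [Matrix.mul_apply]
        exact Finset.sum_congr rfl fun k _ => by
          rw [hXX, Matrix.hadamard_apply, Matrix.map_apply, hXX, hWsymm.apply i k, ← hcsymm i k]
      rw [← Finset.sum_sub_distrib]
      simp only [Matrix.sub_apply, Matrix.diagonal_apply, Matrix.hadamard_apply,
        Matrix.map_apply, hVtV, hXX, mul_sub, mul_ite, mul_zero]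
      rw [Finset.sum_sub_distrib, Finset.sum_sub_distrib, Finset.sum_ite_eq]
      simp only [Finset.mem_univ, if_true, hcd i, mul_one, hD, Finset.mul_sum]
      refine sub_eq_sub_iff_sub_eq_sub.mp ?_
      rw [← Finset.sum_sub_distrib, ← Finset.sum_sub_distrib]
      exact Finset.sum_congr rfl fun j _ => by ring
    have hA2 : frob ((Xᵀ * V + Vᵀ * X).map fun t => t ^ 2)
          (Matrix.hadamard W ((Xᵀ * X).map d2))
        = ∑ i, ∑ j, ((α j - α i) * s i j) ^ 2 * (W i j * d2 (c i j)) := by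
      unfold frob
      refine Finset.sum_congr rfl fun i _ => Finset.sum_congr rfl fun j _ => ?_
      rw [Matrix.map_apply, Matrix.hadamard_apply, Matrix.map_apply, hXtV, hXX]
    have hA3 : α ⬝ᵥ (lap (Mmat W X d1 d2)).mulVec α
        = (∑ i, ∑ j, W i j * hfun d1 d2 (c i j) * α i ^ 2)
          - (∑ i, ∑ j, W i j * hfun d1 d2 (c i j) * (α i * α j)) := by
      unfold lap Mmat Matrix.mulVec dotProduct
      rw [← Finset.sum_sub_distrib]
      refine Finset.sum_congr rfl fun i _ => ?_
      simp only [Matrix.sub_apply, Matrix.diagonal_apply, Matrix.of_apply, sub_mul, ite_mul,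
        zero_mul, hXX]
      rw [Finset.sum_sub_distrib, Finset.sum_ite_eq]
      simp only [Finset.mem_univ, if_true, Finset.mul_sum, mul_sub, Finset.sum_mul]
      rw [← Finset.sum_sub_distrib, ← Finset.sum_sub_distrib]
      exact Finset.sum_congr rfl fun j _ => by ring
    rw [hA1, hA2, hA3]
    set q : Fin n → Fin n → ℝ := fun i j => W i j * (1 - c i j ^ 2) * d2 (c i j) with hqdef
    have hqsymm : ∀ i j, q i j = q j i := by
      intro i j
      show W i j * (1 - c i j ^ 2) * d2 (c i j) = W j i * (1 - c j i ^ 2) * d2 (c j i)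
      rw [← hcsymm, ← hWsymm.apply i j]
    have hzero : ∑ i, ∑ j, q i j * (α j ^ 2 - α i ^ 2) = 0 := by
      have hsw : ∑ i, ∑ j, q i j * α j ^ 2 = ∑ i, ∑ j, q i j * α i ^ 2 := by
        rw [Finset.sum_comm]
        exact Finset.sum_congr rfl fun i _ => Finset.sum_congr rfl fun j _ => by
          rw [hqsymm j i]
      have hsplit : ∑ i, ∑ j, q i j * (α j ^ 2 - α i ^ 2)
          = (∑ i, ∑ j, q i j * α j ^ 2) - ∑ i, ∑ j, q i j * α i ^ 2 := by
        simp [mul_sub, Finset.sum_sub_distrib]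
      rw [hsplit, hsw, sub_self]
    have key : ∀ i j, (1 / 2 : ℝ) * (((α j - α i) * s i j) ^ 2 * (W i j * d2 (c i j)))
        = ((α i ^ 2 * (c i j * (W i j * d1 (c i j))) - α i * α j * (c i j * (W i j * d1 (c i j))))
            - (W i j * hfun d1 d2 (c i j) * α i ^ 2 - W i j * hfun d1 d2 (c i j) * (α i * α j)))
          + (1 / 2) * (q i j * (α j ^ 2 - α i ^ 2)) := by
      intro i j
      rw [hqdef]
      unfold hfun
      linear_combination ((1 / 2 : ℝ) * (α j - α i) ^ 2 * (W i j * d2 (c i j))) * hpyth i j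
    have main : (1 / 2 : ℝ) * (∑ i, ∑ j, ((α j - α i) * s i j) ^ 2 * (W i j * d2 (c i j)))
        = ((∑ i, ∑ j, α i ^ 2 * (c i j * (W i j * d1 (c i j))))
            - (∑ i, ∑ j, α i * α j * (c i j * (W i j * d1 (c i j)))))
          - ((∑ i, ∑ j, W i j * hfun d1 d2 (c i j) * α i ^ 2)
            - (∑ i, ∑ j, W i j * hfun d1 d2 (c i j) * (α i * α j))) := by
      have expand : (1 / 2 : ℝ) * (∑ i, ∑ j, ((α j - α i) * s i j) ^ 2 * (W i j * d2 (c i j)))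
          = ∑ i, ∑ j, ((1 / 2 : ℝ) * (((α j - α i) * s i j) ^ 2 * (W i j * d2 (c i j)))) := by
        simp [Finset.mul_sum]
      rw [expand]
      have := Finset.sum_congr rfl fun i (_ : i ∈ Finset.univ) =>
        Finset.sum_congr rfl fun j (_ : j ∈ Finset.univ) => key i j
      rw [this]
      have h2 : ∑ i, ∑ j, (1 / 2 : ℝ) * (q i j * (α j ^ 2 - α i ^ 2)) = 0 := by
        have : ∑ i, ∑ j, (1 / 2 : ℝ) * (q i j * (α j ^ 2 - α i ^ 2))
            = (1 / 2 : ℝ) * ∑ i, ∑ j, q i j * (α j ^ 2 - α i ^ 2) := by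
          simp [Finset.mul_sum]
        rw [this, hzero, mul_zero]
      simp only [Finset.sum_add_distrib, Finset.sum_sub_distrib]
      rw [h2]
      ring
    linarith [main]
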